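/- arXiv:2304.03985 — 6 statements merged into one kernel-verified Lean document; each statement's English description precedes it below -/
import Mathlib

section
/- For any two full binary trees T1 and T2 with n ≥ 1 internal nodes each, the rotation distance satisfies d(T1, T2) ≤ 2n − 2. -/
/-- Full binary trees: every node is a leaf or has exactly two children.
`node l r` is an internal node with left subtree `l` and right subtree `r`. -/
inductive FBT : Type
  | leaf : FBT
  | node : FBT → FBT → FBT
  deriving DecidableEq

namespace FBT

/-- Number of internal nodes. -/
def internal : FBT → ℕ
  | leaf => 0
  | node l r => internal l + internal r + 1

/-- Height: maximum number of internal nodes on a root-to-leaf path. -/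
def height : FBT → ℕ
  | leaf => 0
  | node l r => max (height l) (height r) + 1

/-- Rank of a full binary tree (Ehrenfeucht–Haussler rank). -/
def rank : FBT → ℕ
  | leaf => 0
  | node l r => if rank l = rank r then rank l + 1 else max (rank l) (rank r)

/-- A full binary tree is skew if every internal node has at least one leaf child. -/
def skew : FBT → Prop
  | leaf => True
  | node l r => (l = leaf ∨ r = leaf) ∧ skew l ∧ skew r

/-- Pre-order traversal of the internal nodes, labeled by the in-order labeling
(1-indexed); `off` is the number of in-order labels used strictly to the left
of this subtree.  `T.preorderAux 0` is the tree permutation of `T`, as a list. -/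
def preorderAux : FBT → ℕ → List ℕ
  | leaf, _ => []
  | node l r, off =>
      (off + internal l + 1) :: (preorderAux l off ++ preorderAux r (off + internal l + 1))

/-- Number of internal nodes on the rightmost root-to-leaf path. -/
def rightPath : FBT → ℕ
  | leaf => 0
  | node _ r => rightPath r + 1

end FBT

/-- One (left or right) rotation, performed at some node of the tree. -/
inductive Rot : FBT → FBT → Prop
  | rotR (C D E : FBT) : Rot (FBT.node (FBT.node C D) E) (FBT.node C (FBT.node D E))
  | rotL (C D E : FBT) : Rot (FBT.node C (FBT.node D E)) (FBT.node (FBT.node C D) E)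
  | congrL {l l' : FBT} (r : FBT) : Rot l l' → Rot (FBT.node l r) (FBT.node l' r)
  | congrR {r r' : FBT} (l : FBT) : Rot r r' → Rot (FBT.node l r) (FBT.node l r')

/-- `RotChainP P k T1 T2`: there is a sequence of `k` rotations transforming `T1`
into `T2` in which every tree reached along the way satisfies `P`. -/
def RotChainP (P : FBT → Prop) : ℕ → FBT → FBT → Prop
  | 0, T1, T2 => T1 = T2
  | k+1, T1, T2 => ∃ T, Rot T1 T ∧ P T ∧ RotChainP P k T T2

/-- `RotChain k T1 T2`: `T1` can be transformed into `T2` by `k` rotations. -/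
def RotChain : ℕ → FBT → FBT → Prop := RotChainP fun _ => True

/-- The rotation distance between two full binary trees. -/
noncomputable def rotDist (T1 T2 : FBT) : ℕ := sInf {k | RotChain k T1 T2}

/-- The right comb on `n` internal nodes. -/
def rightComb : ℕ → FBT
  | 0 => FBT.leaf
  | n+1 => FBT.node FBT.leaf (rightComb n)

/-- The left comb on `n` internal nodes. -/
def leftComb : ℕ → FBT
  | 0 => FBT.leaf
  | n+1 => FBT.node (leftComb n) FBT.leaf

/-- The complete binary tree of height `r`. -/
def completeTree : ℕ → FBT
  | 0 => FBT.leaf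
  | r+1 => FBT.node (completeTree r) (completeTree r)

/-- Replace the leftmost leaf of the first tree by the second tree. -/
def attachLeftmost : FBT → FBT → FBT
  | FBT.leaf, S => S
  | FBT.node l r, S => FBT.node (attachLeftmost l S) r

/-- The transposition `δ_{i,j,k}` (1-indexed, `1 ≤ i < j < k`) applied to a list:
the consecutive blocks occupying positions `i..j-1` and `j..k-1` are swapped,
all other positions are left fixed. -/
def transposeList (i j k : ℕ) (l : List ℕ) : List ℕ :=
  l.take (i-1) ++ (l.drop (j-1)).take (k-j) ++ (l.drop (i-1)).take (j-i) ++ l.drop (k-1)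

/-- `δ_{i,j,k}` is a tree transposition (on permutations of `n` elements): there are
full binary trees `T1, T2` with `n` internal nodes each, at rotation distance `1`,
whose tree permutations `σ, τ` satisfy `δ_{i,j,k}(σ) = τ`. -/
def IsTreeTransposition (n i j k : ℕ) : Prop :=
  ∃ T1 T2 : FBT, T1.internal = n ∧ T2.internal = n ∧ rotDist T1 T2 = 1 ∧
    transposeList i j k (T1.preorderAux 0) = T2.preorderAux 0

/-- `σ` (a permutation of `Fin n`) is a tree permutation: the pre-order traversal of
some full binary tree with `n` internal nodes under the in-order labeling.
(Positions and values are converted to 1-indexed labels.) -/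
def IsTreePerm (n : ℕ) (σ : Equiv.Perm (Fin n)) : Prop :=
  ∃ T : FBT, T.internal = n ∧ T.preorderAux 0 = List.ofFn fun i => (σ i : ℕ) + 1

/-- `σ` is a skew permutation: the tree permutation of some full skew tree. -/
def IsSkewPerm (n : ℕ) (σ : Equiv.Perm (Fin n)) : Prop :=
  ∃ T : FBT, T.internal = n ∧ T.skew ∧ T.preorderAux 0 = List.ofFn fun i => (σ i : ℕ) + 1

/-- `SkewSim σ τ` (written `σ ∼ τ` in the paper): `τ` is obtained from `σ` (lists,
0-indexed) by a skew transposition: for some position `i`, `σ(i)` and `σ(i+1)` are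
respectively the min and the max (or the max and the min) of the suffix starting at
position `i`, and `τ` is `σ` with the entries at positions `i` and `i+1` swapped. -/
def SkewSim (σ τ : List ℕ) : Prop :=
  ∃ i : ℕ, i + 1 < σ.length ∧
    (((∀ x ∈ σ.drop i, σ.getD i 0 ≤ x) ∧ (∀ x ∈ σ.drop i, x ≤ σ.getD (i+1) 0)) ∨
     ((∀ x ∈ σ.drop i, x ≤ σ.getD i 0) ∧ (∀ x ∈ σ.drop i, σ.getD (i+1) 0 ≤ x))) ∧
    τ = σ.take i ++ [σ.getD (i+1) 0, σ.getD i 0] ++ σ.drop (i+2)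

/-- The tree polynomial of a full binary tree: the sum over all leaves of `x^a y^b`,
where `a` (resp. `b`) is the number of left (resp. right) edges on the root-to-leaf
path.  `X 0` plays the role of `x` and `X 1` the role of `y`. -/
noncomputable def treePoly : FBT → MvPolynomial (Fin 2) ℕ
  | FBT.leaf => 1
  | FBT.node l r => MvPolynomial.X 0 * treePoly l + MvPolynomial.X 1 * treePoly r

namespace AuxRD

open FBT

lemma rightPath_le_internal : ∀ T : FBT, T.rightPath ≤ T.internal
  | FBT.leaf => le_refl 0
  | FBT.node l r => by
    simp only [FBT.rightPath, FBT.internal]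
    have := rightPath_le_internal r
    omega

lemma rot_internal {T T' : FBT} (h : Rot T T') : T'.internal = T.internal := by
  induction h with
  | rotR C D E => simp [FBT.internal]; omega
  | rotL C D E => simp [FBT.internal]; omega
  | congrL r _ ih => simp [FBT.internal, ih]
  | congrR l _ ih => simp [FBT.internal, ih]

lemma rot_symm {T T' : FBT} (h : Rot T T') : Rot T' T := by
  induction h with
  | rotR C D E => exact Rot.rotL C D E
  | rotL C D E => exact Rot.rotR C D E
  | congrL r _ ih => exact Rot.congrL r ih
  | congrR l _ ih => exact Rot.congrR l ih

lemma eq_rightComb : ∀ T : FBT, T.rightPath = T.internal → T = rightComb T.internal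
  | FBT.leaf, _ => rfl
  | FBT.node l r, h => by
    simp only [FBT.rightPath, FBT.internal] at h
    have hl := rightPath_le_internal l
    have hr := rightPath_le_internal r
    have hl0 : l.internal = 0 := by omega
    have hrr : r.rightPath = r.internal := by omega
    have hleaf : l = FBT.leaf := by
      cases l with
      | leaf => rfl
      | node a b => simp [FBT.internal] at hl0
    subst hleaf
    have := eq_rightComb r hrr
    simp only [FBT.internal, hl0]
    show FBT.node FBT.leaf r = rightComb (0 + r.internal + 1)
    rw [Nat.zero_add]
    show FBT.node FBT.leaf r = FBT.node FBT.leaf (rightComb r.internal)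
    rw [← this]

lemma step : ∀ T : FBT, T.rightPath < T.internal →
    ∃ T', Rot T T' ∧ T'.rightPath = T.rightPath + 1
  | FBT.leaf, h => by simp [FBT.rightPath, FBT.internal] at h
  | FBT.node l r, h => by
    simp only [FBT.rightPath, FBT.internal] at h
    by_cases hr : r.rightPath < r.internal
    · obtain ⟨r', hrot, hrp⟩ := step r hr
      exact ⟨FBT.node l r', Rot.congrR l hrot, by simp [FBT.rightPath, hrp]⟩
    · have hrr : r.rightPath = r.internal := le_antisymm (rightPath_le_internal r) (not_lt.mp hr)
      have hl : 0 < l.internal := by omega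
      cases l with
      | leaf => simp [FBT.internal] at hl
      | node C D =>
        exact ⟨FBT.node C (FBT.node D r), Rot.rotR C D r, by simp [FBT.rightPath]⟩

lemma chain_trans : ∀ (k1 k2 : ℕ) (a b c : FBT),
    RotChain k1 a b → RotChain k2 b c → RotChain (k1 + k2) a c := by
  intro k1
  induction k1 with
  | zero => intro k2 a b c h1 h2; cases h1; simpa using h2
  | succ k ih =>
    intro k2 a b c h1 h2
    obtain ⟨T, hrot, -, hchain⟩ := h1
    have heq : k + 1 + k2 = (k + k2) + 1 := by omega
    rw [heq]
    exact ⟨T, hrot, trivial, ih k2 T b c hchain h2⟩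

lemma chain_symm : ∀ (k : ℕ) (a b : FBT), RotChain k a b → RotChain k b a := by
  intro k
  induction k with
  | zero => intro a b h; exact h.symm
  | succ k ih =>
    intro a b h
    obtain ⟨T, hrot, -, hchain⟩ := h
    have h1 : RotChain k b T := ih T b hchain
    have h2 : RotChain 1 T a := ⟨a, rot_symm hrot, trivial, rfl⟩
    exact chain_trans k 1 b T a h1 h2

lemma toComb : ∀ (d : ℕ) (T : FBT), T.internal - T.rightPath = d →
    RotChain d T (rightComb T.internal) := by
  intro d
  induction d with
  | zero =>
    intro T h
    have := rightPath_le_internal T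
    have : T.rightPath = T.internal := by omega
    exact (eq_rightComb T this) ▸ rfl
  | succ d ih =>
    intro T h
    have hlt : T.rightPath < T.internal := by omega
    obtain ⟨T', hrot, hrp⟩ := step T hlt
    have hint : T'.internal = T.internal := rot_internal hrot
    have : T'.internal - T'.rightPath = d := by omega
    have := ih T' this
    exact ⟨T', hrot, trivial, hint ▸ this⟩

lemma rightPath_pos (T : FBT) (h : 1 ≤ T.internal) : 1 ≤ T.rightPath := by
  cases T with
  | leaf => simp [FBT.internal] at h
  | node l r => simp [FBT.rightPath]

end AuxRD

/-- For any two full binary trees `T1`, `T2` with `n ≥ 1` internal nodes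
each, the rotation distance satisfies `d(T1,T2) ≤ 2n - 2`. -/
theorem rotation_distance_le_two_n_sub_two (n : ℕ) (hn : 1 ≤ n) (T1 T2 : FBT)
    (h1 : T1.internal = n) (h2 : T2.internal = n) :
    ∃ k ≤ 2 * n - 2, RotChain k T1 T2 := by
  set d1 := T1.internal - T1.rightPath with hd1
  set d2 := T2.internal - T2.rightPath with hd2
  have c1 : RotChain d1 T1 (rightComb T1.internal) := AuxRD.toComb d1 T1 rfl
  have c2 : RotChain d2 T2 (rightComb T2.internal) := AuxRD.toComb d2 T2 rfl
  rw [h1] at c1; rw [h2] at c2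
  have c2' : RotChain d2 (rightComb n) T2 := AuxRD.chain_symm d2 T2 _ c2
  have c : RotChain (d1 + d2) T1 T2 := AuxRD.chain_trans d1 d2 _ _ _ c1 c2'
  refine ⟨d1 + d2, ?_, c⟩
  have p1 := AuxRD.rightPath_pos T1 (h1 ▸ hn)
  have p2 := AuxRD.rightPath_pos T2 (h2 ▸ hn)
  omega
end

section
/- A permutation σ ∈ S_n is a tree permutation if and only if there do not exist indices i < j < k such that σ(k) < σ(i) < σ(j). -/
namespace TreePermAux

def Avoids (L : List ℕ) : Prop := ∀ a b c : ℕ, [a,b,c].Sublist L → ¬(c < a ∧ a < b)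

lemma Avoids.sublist {L M : List ℕ} (h : L.Sublist M) (hM : Avoids M) : Avoids L :=
  fun a b c hs => hM a b c (hs.trans h)

lemma perm_preorder : ∀ (T : FBT) (off : ℕ),
    (T.preorderAux off).Perm (List.range' (off+1) T.internal)
  | FBT.leaf, off => by simp [FBT.preorderAux, FBT.internal]
  | FBT.node l r, off => by
    have hl := perm_preorder l off
    have hr := perm_preorder r (off + l.internal + 1)
    simp only [FBT.preorderAux, FBT.internal]
    have key : List.range' (off+1) (l.internal + r.internal + 1)
        = List.range' (off+1) l.internal
          ++ (off + l.internal + 1) :: List.range' (off + l.internal + 2) r.internal := by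
      have h1 := List.range'_append (s := off+1) (m := l.internal) (n := r.internal+1) (step := 1)
      rw [show off+1+1*l.internal = off + l.internal + 1 by omega, List.range'_succ,
        show off + l.internal + 1 + 1 = off + l.internal + 2 by omega] at h1
      rw [show l.internal + r.internal + 1 = l.internal + (r.internal + 1) by omega, ← h1]
    rw [key]
    exact List.perm_middle.symm.trans (hl.append (hr.cons _))

lemma mem_preorder {T : FBT} {off x : ℕ} (h : x ∈ T.preorderAux off) :
    off + 1 ≤ x ∧ x < off + 1 + T.internal :=
  List.mem_range'_1.mp ((perm_preorder T off).subset h)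

lemma avoids_preorder : ∀ (T : FBT) (off : ℕ), Avoids (T.preorderAux off)
  | FBT.leaf, _ => by intro a b c hs; simp [FBT.preorderAux] at hs
  | FBT.node l r, off => by
    intro a b c hs hc
    obtain ⟨hca, hab⟩ := hc
    simp only [FBT.preorderAux] at hs
    cases hs with
    | cons _ h =>
      rw [List.sublist_append_iff] at h
      obtain ⟨l1, l2, heq, s1, s2⟩ := h
      rcases l1 with _ | ⟨x, l1⟩
      · simp only [List.nil_append] at heq
        subst heq
        exact avoids_preorder r _ a b c s2 ⟨hca, hab⟩
      rcases l1 with _ | ⟨y, l1⟩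
      · simp only [List.cons_append, List.nil_append] at heq
        injection heq with e1 e2
        subst e1; subst e2
        have ham := mem_preorder (List.singleton_sublist.mp s1)
        have hcm := mem_preorder (s2.subset (show c ∈ [b,c] by simp))
        omega
      rcases l1 with _ | ⟨z, l1⟩
      · simp only [List.cons_append, List.nil_append] at heq
        injection heq with e1 heq; injection heq with e2 e3
        subst e1; subst e2; subst e3
        have ham := mem_preorder (s1.subset (show a ∈ [a,b] by simp))
        have hcm := mem_preorder (List.singleton_sublist.mp s2)
        omega
      · simp only [List.cons_append] at heq
        injection heq with e1 heq; injection heq with e2 heq; injection heq with e3 heq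
        obtain ⟨rfl, rfl⟩ := List.append_eq_nil_iff.mp heq.symm
        subst e1; subst e2; subst e3
        exact avoids_preorder l off a b c s1 ⟨hca, hab⟩
    | cons_cons _ h =>
      rw [List.sublist_append_iff] at h
      obtain ⟨l1, l2, heq, s1, s2⟩ := h
      rcases l1 with _ | ⟨x, l1⟩
      · simp only [List.nil_append] at heq
        subst heq
        have hcm := mem_preorder (s2.subset (show c ∈ [b,c] by simp))
        omega
      rcases l1 with _ | ⟨y, l1⟩
      · simp only [List.cons_append, List.nil_append] at heq
        injection heq with e1 e2
        subst e1
        have hbm := mem_preorder (List.singleton_sublist.mp s1)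
        omega
      · simp only [List.cons_append] at heq
        injection heq with e1 heq; injection heq with e2 heq
        obtain ⟨rfl, rfl⟩ := List.append_eq_nil_iff.mp heq.symm
        subst e1; subst e2
        have hbm := mem_preorder (s1.subset (show b ∈ [b,c] by simp))
        omega

lemma split_below_above (a : ℕ) : ∀ (L : List ℕ),
    (∀ b c, [b,c].Sublist L → ¬(c < a ∧ a < b)) → (∀ x ∈ L, x ≠ a) →
    L = L.filter (· < a) ++ L.filter (a < ·) := by
  intro L
  induction L with
  | nil => simp
  | cons x t ih =>
    intro hpat hne
    by_cases hx : x < a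
    · rw [List.filter_cons_of_pos (by simpa using hx),
        List.filter_cons_of_neg (by simp; omega)]
      simp only [List.cons_append]
      congr 1
      exact ih (fun b c h => hpat b c (h.cons x)) (fun y hy => hne y (List.mem_cons_of_mem _ hy))
    · have hax : a < x := lt_of_le_of_ne (not_lt.mp hx) (Ne.symm (hne x (List.mem_cons_self)))
      have hall : ∀ y ∈ t, a < y := by
        intro y hy
        have h2 : [x,y].Sublist (x :: t) := (List.singleton_sublist.mpr hy).cons₂ x
        have := hpat x y h2
        have hne' := hne y (List.mem_cons_of_mem _ hy)
        omega
      have h1 : t.filter (· < a) = [] := by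
        rw [List.filter_eq_nil_iff]
        intro y hy; have := hall y hy; simp; omega
      have h2 : t.filter (a < ·) = t := by
        rw [List.filter_eq_self]
        intro y hy; simpa using hall y hy
      rw [List.filter_cons_of_neg (by simpa using hx),
        List.filter_cons_of_pos (by simpa using hax), h1, h2]
      simp

lemma exists_tree : ∀ (m : ℕ) (L : List ℕ) (off : ℕ),
    L.Perm (List.range' (off+1) m) → Avoids L →
    ∃ T : FBT, T.internal = m ∧ T.preorderAux off = L := by
  intro m
  induction m using Nat.strong_induction_on with
  | _ m ih =>
  intro L off hperm hav
  cases L with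
  | nil =>
    have hm : m = 0 := by simpa using hperm.length_eq.symm
    subst hm
    exact ⟨FBT.leaf, rfl, rfl⟩
  | cons a L' =>
    have ha : a ∈ List.range' (off+1) m := hperm.subset (List.mem_cons_self)
    rw [List.mem_range'_1] at ha
    obtain ⟨s, hs⟩ : ∃ s, a = off + 1 + s := ⟨a - (off+1), by omega⟩
    have hsm : s < m := by omega
    have hnd : (a :: L').Nodup := hperm.nodup_iff.mpr (List.nodup_range' (s := off+1) (n := m))
    have hne : ∀ x ∈ L', x ≠ a := by
      intro x hx hxa
      exact (List.nodup_cons.mp hnd).1 (hxa ▸ hx)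
    have hpat : ∀ b c, [b,c].Sublist L' → ¬(c < a ∧ a < b) :=
      fun b c h => hav a b c (h.cons₂ a)
    have hsplit := split_below_above a L' hpat hne
    have hfa1 : (a :: L').filter (· < a) = L'.filter (· < a) := by
      rw [List.filter_cons_of_neg]; simp
    have hfa2 : (a :: L').filter (a < ·) = L'.filter (a < ·) := by
      rw [List.filter_cons_of_neg]; simp
    have hr1 : (List.range' (off+1) m).filter (· < a) = List.range' (off+1) s := by
      have hsplit2 : List.range' (off+1) m
          = List.range' (off+1) s ++ List.range' (off+1+s) (m-s) := by
        have := List.range'_append (s := off+1) (m := s) (n := m-s) (step := 1)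
        simp only [one_mul] at this
        rw [show m = s + (m - s) from by omega, ← this]
        rw [show s + (m - s) - s = m - s from by omega]
      rw [hsplit2, List.filter_append]
      rw [List.filter_eq_self.mpr, List.filter_eq_nil_iff.mpr, List.append_nil]
      · intro y hy; rw [List.mem_range'_1] at hy; simp; omega
      · intro y hy; rw [List.mem_range'_1] at hy; simp; omega
    have hr2 : (List.range' (off+1) m).filter (a < ·) = List.range' (a+1) (m-s-1) := by
      have hsplit2 : List.range' (off+1) m
          = List.range' (off+1) (s+1) ++ List.range' (a+1) (m-s-1) := by
        have := List.range'_append (s := off+1) (m := s+1) (n := m-s-1) (step := 1)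
        rw [show off+1+1*(s+1) = a+1 by omega] at this
        have h' : List.range' (off+1) m = List.range' (off+1) (s+1+(m-s-1)) := by
          rw [show s + 1 + (m - s - 1) = m by omega]
        rw [h', ← this]
      rw [hsplit2, List.filter_append]
      rw [List.filter_eq_nil_iff.mpr, List.filter_eq_self.mpr, List.nil_append]
      · intro y hy; rw [List.mem_range'_1] at hy; simp; omega
      · intro y hy; rw [List.mem_range'_1] at hy; simp; omega
    have hSperm : (L'.filter (· < a)).Perm (List.range' (off+1) s) := by
      rw [← hfa1, ← hr1]; exact hperm.filter _
    have hBperm : (L'.filter (a < ·)).Perm (List.range' (a+1) (m-s-1)) := by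
      rw [← hfa2, ← hr2]; exact hperm.filter _
    have hSav : Avoids (L'.filter (· < a)) :=
      Avoids.sublist (List.filter_sublist.trans (List.sublist_cons_self a L')) hav
    have hBav : Avoids (L'.filter (a < ·)) :=
      Avoids.sublist (List.filter_sublist.trans (List.sublist_cons_self a L')) hav
    obtain ⟨Tl, hTl1, hTl2⟩ := ih s hsm _ off hSperm hSav
    obtain ⟨Tr, hTr1, hTr2⟩ := ih (m-s-1) (by omega) _ a hBperm hBav
    refine ⟨FBT.node Tl Tr, ?_, ?_⟩
    · simp only [FBT.internal, hTl1, hTr1]; omega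
    · simp only [FBT.preorderAux, hTl1]
      rw [show off + s + 1 = a by omega, hTl2, hTr2, ← hsplit]

end TreePermAux

open TreePermAux

/-- `σ ∈ S_n` is a tree permutation iff there are no indices
`i < j < k` with `σ(k) < σ(i) < σ(j)`. -/
theorem tree_permutation_characterization (n : ℕ) (σ : Equiv.Perm (Fin n)) :
    IsTreePerm n σ ↔ ¬ ∃ i j k : Fin n, i < j ∧ j < k ∧ σ k < σ i ∧ σ i < σ j := by
  classical
  have hlen : (List.ofFn fun i => (σ i : ℕ) + 1).length = n := by simp
  have hperm : (List.ofFn fun i => (σ i : ℕ) + 1).Perm (List.range' 1 n) := by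
    apply List.perm_of_nodup_nodup_toFinset_eq
    · rw [List.nodup_ofFn]
      intro i j h
      simp only [add_left_inj] at h
      exact σ.injective (Fin.val_injective h)
    · exact List.nodup_range' (s := 1) (n := n)
    · ext x
      simp only [List.mem_toFinset, List.mem_ofFn, List.mem_range'_1, Set.mem_range]
      constructor
      · rintro ⟨i, rfl⟩
        have := (σ i).isLt; omega
      · rintro ⟨h1, h2⟩
        refine ⟨σ.symm ⟨x - 1, by omega⟩, ?_⟩
        simp only [Equiv.apply_symm_apply]
        omega
  constructor
  · rintro ⟨T, hT, hpre⟩ ⟨i, j, k, hij, hjk, h1, h2⟩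
    have hav : Avoids (List.ofFn fun i => (σ i : ℕ) + 1) := by
      rw [← hpre]; exact avoids_preorder T 0
    have hi : (i : ℕ) < (List.ofFn fun i => (σ i : ℕ) + 1).length := by
      rw [hlen]; exact i.isLt
    have hj : (j : ℕ) < (List.ofFn fun i => (σ i : ℕ) + 1).length := by
      rw [hlen]; exact j.isLt
    have hk : (k : ℕ) < (List.ofFn fun i => (σ i : ℕ) + 1).length := by
      rw [hlen]; exact k.isLt
    have h1' : (i:ℕ) < (j:ℕ) := Fin.lt_def.mp hij
    have h2' : (j:ℕ) < (k:ℕ) := Fin.lt_def.mp hjk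
    have hp : List.Pairwise
        (fun x1 x2 : Fin (List.ofFn fun i => (σ i : ℕ) + 1).length => (x1:ℕ) < (x2:ℕ))
        [⟨i, hi⟩, ⟨j, hj⟩, ⟨k, hk⟩] := by
      refine List.Pairwise.cons ?_ (List.Pairwise.cons ?_
        (List.Pairwise.cons ?_ List.Pairwise.nil))
      · intro x hx
        simp only [List.mem_cons, List.not_mem_nil, or_false, List.mem_singleton] at hx
        rcases hx with rfl | rfl
        · exact h1'
        · exact h1'.trans h2'
      · intro x hx
        simp only [List.mem_cons, List.not_mem_nil, or_false, List.mem_singleton] at hx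
        subst hx
        exact h2'
      · intro x hx
        simp at hx
    have hsub := List.map_getElem_sublist hp
    simp only [List.map_cons, List.map_nil, Fin.getElem_fin, List.getElem_ofFn] at hsub
    have ei : ∀ (p : ((i:ℕ)) < (List.ofFn fun i => (σ i : ℕ) + 1).length)
        (q : (List.ofFn fun i => (σ i : ℕ) + 1).length = n),
        Fin.cast q ⟨(i:ℕ), p⟩ = i := fun p q => by ext; rfl
    have hsub' : [(σ i : ℕ) + 1, (σ j : ℕ) + 1, (σ k : ℕ) + 1].Sublist
        (List.ofFn fun i => (σ i : ℕ) + 1) := by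
      convert hsub using 3 <;> congr 1 <;> exact (by ext; rfl)
    exact hav _ _ _ hsub' ⟨by have := Fin.lt_def.mp h1; omega,
      by have := Fin.lt_def.mp h2; omega⟩
  · intro hno
    have hav : Avoids (List.ofFn fun i => (σ i : ℕ) + 1) := by
      intro a b c hsub hc
      obtain ⟨is, his, hpw⟩ := List.sublist_eq_map_getElem hsub
      have hlen3 : is.length = 3 := by
        have := congrArg List.length his
        simpa using this.symm
      obtain ⟨i, j, k, rfl⟩ := List.length_eq_three.mp hlen3
      simp only [List.map_cons, List.map_nil, Fin.getElem_fin, List.getElem_ofFn] at his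
      have hij : (i:ℕ) < (j:ℕ) := (List.pairwise_cons.mp hpw).1 j (by simp)
      have hjk : (j:ℕ) < (k:ℕ) :=
        (List.pairwise_cons.mp (List.pairwise_cons.mp hpw).2).1 k (by simp)
      obtain ⟨hca, hab⟩ := hc
      have e1 : a = (σ ⟨(i:ℕ), by omega⟩ : ℕ) + 1 := by
        have := (List.cons_eq_cons.mp his).1
        exact this
      have e2 : b = (σ ⟨(j:ℕ), by omega⟩ : ℕ) + 1 := by
        have := (List.cons_eq_cons.mp (List.cons_eq_cons.mp his).2).1
        exact this
      have e3 : c = (σ ⟨(k:ℕ), by omega⟩ : ℕ) + 1 := by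
        have := (List.cons_eq_cons.mp
          (List.cons_eq_cons.mp (List.cons_eq_cons.mp his).2).2).1
        exact this
      apply hno
      refine ⟨⟨(i:ℕ), by omega⟩, ⟨(j:ℕ), by omega⟩, ⟨(k:ℕ), by omega⟩,
        Fin.lt_def.mpr (by simpa using hij), Fin.lt_def.mpr (by simpa using hjk),
        Fin.lt_def.mpr (by omega), Fin.lt_def.mpr (by omega)⟩
    obtain ⟨T, hT1, hT2⟩ := exists_tree n _ 0 (by simpa using hperm) hav
    exact ⟨T, hT1, hT2⟩
end

section
/- A permutation σ ∈ S_n is a skew permutation (i.e., the tree permutation of some full skew tree with n internal nodes) if and only if for every i ∈ [n], σ(i) = min{σ(i), σ(i+1), ..., σ(n)} or σ(i) = max{σ(i), σ(i+1), ..., σ(n)}. -/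
/-- Auxiliary: every entry is min or max of the suffix it starts. -/
def MM : List ℕ → Prop
  | [] => True
  | a :: t => ((∀ x ∈ t, a ≤ x) ∨ (∀ x ∈ t, x ≤ a)) ∧ MM t

lemma mem_preorderAux {T : FBT} {off k : ℕ} (h : k ∈ T.preorderAux off) :
    off < k ∧ k ≤ off + T.internal := by
  induction T generalizing off with
  | leaf => simp [FBT.preorderAux] at h
  | node l r ihl ihr =>
    simp only [FBT.preorderAux, FBT.internal, List.mem_cons, List.mem_append] at h ⊢
    rcases h with h | h | h
    · omega
    · have := ihl h; omega
    · have := ihr h; omega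

lemma skew_MM {T : FBT} (h : T.skew) (off : ℕ) : MM (T.preorderAux off) := by
  induction T generalizing off with
  | leaf => trivial
  | node l r ihl ihr =>
    obtain ⟨hlr, hl, hr⟩ := h
    rcases hlr with rfl | rfl
    · simp only [FBT.preorderAux, FBT.internal, List.nil_append, MM]
      refine ⟨Or.inl fun x hx => ?_, ihr hr _⟩
      have := mem_preorderAux hx; omega
    · simp only [FBT.preorderAux, FBT.internal, List.append_nil, MM]
      refine ⟨Or.inr fun x hx => ?_, ihl hl _⟩
      have := mem_preorderAux hx; omega

lemma MM_drop_spec {L : List ℕ} (h : MM L) (i : ℕ) :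
    (∀ x ∈ L.drop i, L.getD i 0 ≤ x) ∨ (∀ x ∈ L.drop i, x ≤ L.getD i 0) := by
  induction L generalizing i with
  | nil => left; simp
  | cons a t ih =>
    obtain ⟨h1, h2⟩ := h
    cases i with
    | zero =>
      rcases h1 with h1 | h1
      · left; intro x hx
        simp only [List.drop_zero, List.mem_cons] at hx
        rcases hx with rfl | hx
        · simp [List.getD]
        · simpa [List.getD] using h1 x hx
      · right; intro x hx
        simp only [List.drop_zero, List.mem_cons] at hx
        rcases hx with rfl | hx
        · simp [List.getD]
        · simpa [List.getD] using h1 x hx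
    | succ i => simpa [List.getD] using ih h2 i

lemma MM_of_spec {L : List ℕ}
    (h : ∀ i, (∀ x ∈ L.drop i, L.getD i 0 ≤ x) ∨ (∀ x ∈ L.drop i, x ≤ L.getD i 0)) :
    MM L := by
  induction L with
  | nil => trivial
  | cons a t ih =>
    refine ⟨?_, ih fun i => by simpa [List.getD] using h (i + 1)⟩
    rcases h 0 with h0 | h0
    · left; intro x hx
      simpa [List.getD] using h0 x (by simp [hx])
    · right; intro x hx
      simpa [List.getD] using h0 x (by simp [hx])

lemma exists_skew : ∀ (m off : ℕ) (L : List ℕ),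
    L.Perm (List.range' (off + 1) m) → MM L →
    ∃ T : FBT, T.skew ∧ T.internal = m ∧ T.preorderAux off = L := by
  intro m
  induction m with
  | zero =>
    intro off L hp _
    have : L = [] := List.eq_nil_of_length_eq_zero (by simpa using hp.length_eq)
    exact ⟨FBT.leaf, trivial, rfl, by simp [FBT.preorderAux, this]⟩
  | succ m ih =>
    intro off L hp hmm
    obtain ⟨a, t, rfl⟩ : ∃ a t, L = a :: t := by
      cases L with
      | nil => exfalso; have := hp.length_eq; simp at this
      | cons a t => exact ⟨a, t, rfl⟩
    obtain ⟨h1, h2⟩ := hmm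
    have hmemL : ∀ x ∈ a :: t, off + 1 ≤ x ∧ x < off + 1 + (m + 1) := fun x hx =>
      List.mem_range'_1.mp (hp.mem_iff.mp hx)
    rcases h1 with h1 | h1
    · -- a is the minimum, so a = off + 1
      have ha : a = off + 1 := by
        have h1' : off + 1 ∈ a :: t := hp.mem_iff.mpr (List.mem_range'_1.mpr (by omega))
        have haL := hmemL a (by simp)
        rcases List.mem_cons.mp h1' with h | h
        · omega
        · have := h1 _ h; omega
      subst ha
      have ht : t.Perm (List.range' (off + 1 + 1) m) := by
        have : ((off + 1) :: t).Perm ((off + 1) :: List.range' (off + 1 + 1) m) := by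
          simpa [List.range'_succ] using hp
        exact this.cons_inv
      obtain ⟨R, hRs, hRi, hRp⟩ := ih (off + 1) t ht h2
      refine ⟨FBT.node FBT.leaf R, ⟨Or.inl rfl, trivial, hRs⟩, ?_, ?_⟩
      · simp [FBT.internal, hRi]
      · simp [FBT.preorderAux, FBT.internal, hRp]
    · -- a is the maximum, so a = off + 1 + m
      have ha : a = off + 1 + m := by
        have h1' : off + 1 + m ∈ a :: t := hp.mem_iff.mpr (List.mem_range'_1.mpr (by omega))
        have haL := hmemL a (by simp)
        rcases List.mem_cons.mp h1' with h | h
        · omega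
        · have := h1 _ h; omega
      subst ha
      have ht : t.Perm (List.range' (off + 1) m) := by
        have h3 : ((off + 1 + m) :: t).Perm ((off + 1 + m) :: List.range' (off + 1) m) := by
          refine hp.trans ?_
          have := List.perm_append_singleton (off + 1 + 1 * m) (List.range' (off + 1) m)
          simpa [List.range'_concat] using this
        exact h3.cons_inv
      obtain ⟨R, hRs, hRi, hRp⟩ := ih off t ht h2
      refine ⟨FBT.node R FBT.leaf, ⟨Or.inr rfl, hRs, trivial⟩, ?_, ?_⟩
      · simp [FBT.internal, hRi]
      · simp [FBT.preorderAux, FBT.internal, hRi, hRp]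
        omega

lemma mem_drop_of_getElem {α : Type*} (l : List α) (i j : ℕ) (h : j < l.length)
    (hij : i ≤ j) : l[j] ∈ l.drop i := by
  rw [List.mem_iff_getElem]
  refine ⟨j - i, by rw [List.length_drop]; omega, ?_⟩
  rw [List.getElem_drop]
  congr 1
  omega

/-- `σ ∈ S_n` is a skew permutation iff for every `i`, `σ(i)` is the
minimum or the maximum of `{σ(i), σ(i+1), …, σ(n)}`. -/
theorem skew_permutation_characterization (n : ℕ) (σ : Equiv.Perm (Fin n)) :
    IsSkewPerm n σ ↔
      ∀ i : Fin n, (∀ j : Fin n, i ≤ j → σ i ≤ σ j) ∨ (∀ j : Fin n, i ≤ j → σ j ≤ σ i) := by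
  constructor
  · rintro ⟨T, hTn, hTs, hTp⟩ i
    have hmm : MM (List.ofFn fun i => (σ i : ℕ) + 1) := hTp ▸ skew_MM hTs 0
    set L := List.ofFn fun i => (σ i : ℕ) + 1 with hL
    have hlen : L.length = n := by simp [hL]
    have hget : ∀ j : Fin n, L[(j : ℕ)]'(by omega) = (σ j : ℕ) + 1 := by
      intro j; simp [hL, List.getElem_ofFn]
    have hgd : L.getD (i : ℕ) 0 = (σ i : ℕ) + 1 := by
      rw [List.getD_eq_getElem L 0 (by omega)]; exact hget i
    have hmem : ∀ j : Fin n, (i : ℕ) ≤ j → ((σ j : ℕ) + 1) ∈ L.drop (i : ℕ) := by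
      intro j hij
      have := mem_drop_of_getElem L (i : ℕ) (j : ℕ) (by omega) hij
      rwa [hget j] at this
    rcases MM_drop_spec hmm (i : ℕ) with hc | hc
    · left; intro j hij
      have := hc _ (hmem j hij)
      rw [hgd] at this
      exact Fin.le_def.mpr (by omega)
    · right; intro j hij
      have := hc _ (hmem j hij)
      rw [hgd] at this
      exact Fin.le_def.mpr (by omega)
  · intro h
    set L := List.ofFn fun i => (σ i : ℕ) + 1 with hL
    have hlen : L.length = n := by simp [hL]
    have hget : ∀ j : Fin n, L[(j : ℕ)]'(by omega) = (σ j : ℕ) + 1 := by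
      intro j; simp [hL, List.getElem_ofFn]
    -- L is a permutation of range' 1 n
    have hperm : L.Perm (List.range' (0 + 1) n) := by
      apply List.perm_of_nodup_nodup_toFinset_eq
      · rw [hL, List.nodup_ofFn]
        intro x y hxy
        exact σ.injective (Fin.ext (by simpa using hxy))
      · exact List.nodup_range' (h := Nat.one_pos)
      · ext k
        simp only [List.mem_toFinset, hL, List.mem_ofFn, Set.mem_range, List.mem_range'_1]
        constructor
        · rintro ⟨j, rfl⟩; have := (σ j).isLt; omega
        · rintro ⟨h1, h2⟩
          obtain ⟨j, hj⟩ := σ.surjective ⟨k - 1, by omega⟩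
          exact ⟨j, by rw [hj]; simp; omega⟩
    -- L satisfies MM
    have hmm : MM L := by
      apply MM_of_spec
      intro i
      by_cases hi : i < n
      · have hgd : L.getD i 0 = (σ ⟨i, hi⟩ : ℕ) + 1 := by
          rw [List.getD_eq_getElem L 0 (by omega)]; exact hget ⟨i, hi⟩
        have hx : ∀ x ∈ L.drop i, ∃ j : Fin n, i ≤ (j : ℕ) ∧ x = (σ j : ℕ) + 1 := by
          intro x hx
          obtain ⟨k, hk, hxk⟩ := List.getElem_of_mem hx
          rw [List.length_drop, hlen] at hk
          rw [List.getElem_drop] at hxk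
          exact ⟨⟨i + k, by omega⟩, Nat.le_add_right i k, by rw [← hxk, hget ⟨i + k, by omega⟩]⟩
        rcases h ⟨i, hi⟩ with hc | hc
        · left; intro x hxm
          obtain ⟨j, hij, rfl⟩ := hx x hxm
          have := hc j hij
          rw [hgd]; rw [Fin.le_def] at this; omega
        · right; intro x hxm
          obtain ⟨j, hij, rfl⟩ := hx x hxm
          have := hc j hij
          rw [hgd]; rw [Fin.le_def] at this; omega
      · left; intro x hxm
        rw [List.drop_eq_nil_of_le (by omega)] at hxm
        simp at hxm
    obtain ⟨T, hTs, hTi, hTp⟩ := exists_skew n 0 L hperm hmm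
    exact ⟨T, hTi, hTs, hTp⟩
end

section
/- Every tree transposition is a 1-transposition; that is, if δ_{i,j,k} is a transposition for which there exist full binary trees T1, T2 at rotation distance 1 whose tree permutations σ, τ satisfy δ_{i,j,k}(σ) = τ, then j = i+1 or k = j+1. -/
section AuxTreeTransposition

open List

lemma aux_rot_internal_eq {T1 T2 : FBT} (h : Rot T1 T2) : T1.internal = T2.internal := by
  induction h with
  | rotR C D E => simp [FBT.internal]; omega
  | rotL C D E => simp [FBT.internal]; omega
  | congrL r _ ih => simp [FBT.internal, ih]
  | congrR l _ ih => simp [FBT.internal, ih]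

lemma aux_mem_preorderAux : ∀ (T : FBT) (off x : ℕ), x ∈ T.preorderAux off →
    off < x ∧ x ≤ off + T.internal := by
  intro T
  induction T with
  | leaf => intro off x hx; simp [FBT.preorderAux] at hx
  | node l r ihl ihr =>
    intro off x hx
    simp only [FBT.preorderAux, FBT.internal, List.mem_cons, List.mem_append] at hx ⊢
    rcases hx with h | h | h
    · omega
    · have := ihl off x h; omega
    · have := ihr (off + l.internal + 1) x h; omega

lemma aux_nodup_preorderAux (T : FBT) (off : ℕ) : (T.preorderAux off).Nodup := by
  induction T generalizing off with
  | leaf => simp [FBT.preorderAux]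
  | node l r ihl ihr =>
    rw [FBT.preorderAux]
    refine List.nodup_cons.2 ⟨?_, List.Nodup.append (ihl off) (ihr _) ?_⟩
    · intro h
      rcases List.mem_append.1 h with h | h
      · have := aux_mem_preorderAux l off _ h; omega
      · have := aux_mem_preorderAux r _ _ h; omega
    · intro x hx hx'
      have h1 := aux_mem_preorderAux l off x hx
      have h2 := aux_mem_preorderAux r _ x hx'
      omega

lemma aux_length_preorderAux (T : FBT) (off : ℕ) : (T.preorderAux off).length = T.internal := by
  induction T generalizing off with
  | leaf => rfl
  | node l r ihl ihr =>
    simp only [FBT.preorderAux, FBT.internal, List.length_cons, List.length_append, ihl, ihr]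
    try omega

lemma aux_rot_decomp {T1 T2 : FBT} (h : Rot T1 T2) : ∀ off : ℕ,
    ∃ (P B Q : List ℕ) (a : ℕ), B ≠ [] ∧
      ((T1.preorderAux off = P ++ a :: (B ++ Q) ∧ T2.preorderAux off = P ++ (B ++ a :: Q)) ∨
       (T1.preorderAux off = P ++ (B ++ a :: Q) ∧ T2.preorderAux off = P ++ a :: (B ++ Q))) := by
  induction h with
  | rotR C D E =>
    intro off
    have e1 : off + (C.internal + D.internal + 1) + 1 = off + C.internal + D.internal + 2 := by omega
    have e2 : off + C.internal + 1 + D.internal + 1 = off + C.internal + D.internal + 2 := by omega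
    refine ⟨[], (off + C.internal + 1) :: C.preorderAux off,
      D.preorderAux (off + C.internal + 1) ++ E.preorderAux (off + C.internal + D.internal + 2),
      off + C.internal + D.internal + 2, by simp, Or.inl ⟨?_, ?_⟩⟩
    · simp only [FBT.preorderAux, FBT.internal, e1, e2]
      simp [List.append_assoc]
    · simp only [FBT.preorderAux, FBT.internal, e1, e2]
      simp [List.append_assoc]
  | rotL C D E =>
    intro off
    have e1 : off + (C.internal + D.internal + 1) + 1 = off + C.internal + D.internal + 2 := by omega
    have e2 : off + C.internal + 1 + D.internal + 1 = off + C.internal + D.internal + 2 := by omega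
    refine ⟨[], (off + C.internal + 1) :: C.preorderAux off,
      D.preorderAux (off + C.internal + 1) ++ E.preorderAux (off + C.internal + D.internal + 2),
      off + C.internal + D.internal + 2, by simp, Or.inr ⟨?_, ?_⟩⟩
    · simp only [FBT.preorderAux, FBT.internal, e1, e2]
      simp [List.append_assoc]
    · simp only [FBT.preorderAux, FBT.internal, e1, e2]
      simp [List.append_assoc]
  | @congrL l l' r hrot ih =>
    intro off
    obtain ⟨P, B, Q, a, hB, hcase⟩ := ih off
    have hint : l.internal = l'.internal := aux_rot_internal_eq hrot
    refine ⟨(off + l.internal + 1) :: P, B, Q ++ r.preorderAux (off + l.internal + 1), a, hB, ?_⟩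
    rcases hcase with ⟨hA, hC⟩ | ⟨hA, hC⟩
    · left
      constructor
      · simp only [FBT.preorderAux, hA]
        try simp [List.append_assoc]
      · simp only [FBT.preorderAux, ← hint, hC]
        try simp [List.append_assoc]
    · right
      constructor
      · simp only [FBT.preorderAux, hA]
        try simp [List.append_assoc]
      · simp only [FBT.preorderAux, ← hint, hC]
        try simp [List.append_assoc]
  | @congrR r r' l hrot ih =>
    intro off
    obtain ⟨P, B, Q, a, hB, hcase⟩ := ih (off + l.internal + 1)
    refine ⟨(off + l.internal + 1) :: (l.preorderAux off ++ P), B, Q, a, hB, ?_⟩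
    rcases hcase with ⟨hA, hC⟩ | ⟨hA, hC⟩
    · left
      constructor
      · simp only [FBT.preorderAux, hA]
        try simp [List.append_assoc]
      · simp only [FBT.preorderAux, hC]
        try simp [List.append_assoc]
    · right
      constructor
      · simp only [FBT.preorderAux, hA]
        try simp [List.append_assoc]
      · simp only [FBT.preorderAux, hC]
        try simp [List.append_assoc]

lemma aux_rot_of_rotDist_one {T1 T2 : FBT} (h : rotDist T1 T2 = 1) : Rot T1 T2 := by
  have hne : {k | RotChain k T1 T2}.Nonempty := by
    by_contra hc
    rw [Set.not_nonempty_iff_eq_empty] at hc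
    rw [rotDist, hc, Nat.sInf_empty] at h
    exact one_ne_zero h.symm
  have hmem := Nat.sInf_mem hne
  rw [← rotDist, h] at hmem
  simp only [RotChain, RotChainP, Set.mem_setOf_eq] at hmem
  obtain ⟨T, hT, -, hT2⟩ := hmem
  exact hT2 ▸ hT

lemma aux_nodup_inj {l : List ℕ} (h : l.Nodup) {m m' : ℕ} (hm : m < l.length)
    (hm' : m' < l.length) (he : l[m]? = l[m']?) : m = m' := by
  rw [List.getElem?_eq_getElem hm, List.getElem?_eq_getElem hm'] at he
  exact h.getElem_inj_iff.mp (Option.some.inj he)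

end AuxTreeTransposition

section KeyTreeTransposition

lemma aux_key_case1 (σ τ P B Q : List ℕ) (a : ℕ) (hB : B ≠ []) (hnd : σ.Nodup)
    (i0 j0 k0 : ℕ) (hij : i0 < j0) (hjk : j0 < k0) (hk : k0 ≤ σ.length)
    (hσ : σ = P ++ a :: (B ++ Q)) (hτ : τ = P ++ (B ++ a :: Q))
    (ht : σ.take i0 ++ (σ.drop j0).take (k0 - j0) ++ (σ.drop i0).take (j0 - i0) ++ σ.drop k0 = τ) :
    j0 = i0 + 1 := by
  have hb : 0 < B.length := List.length_pos_iff.2 hB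
  have hn : σ.length = P.length + 1 + B.length + Q.length := by
    rw [hσ]; simp only [List.length_append, List.length_cons]; omega
  -- transpose-side facts
  have T1 : ∀ m, m < i0 → τ[m]? = σ[m]? := by
    intro m hm
    rw [← ht]
    simp only [List.getElem?_append, List.getElem?_take, List.getElem?_drop,
      List.length_append, List.length_take, List.length_drop]
    split_ifs <;> first | rfl | (exfalso; omega) | (congr 1; omega)
  have T2 : τ[i0]? = σ[j0]? := by
    rw [← ht]
    simp only [List.getElem?_append, List.getElem?_take, List.getElem?_drop,
      List.length_append, List.length_take, List.length_drop]
    split_ifs <;> first | rfl | (exfalso; omega) | (congr 1; omega)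
  have T3 : τ[k0-1]? = σ[j0-1]? := by
    rw [← ht]
    simp only [List.getElem?_append, List.getElem?_take, List.getElem?_drop,
      List.length_append, List.length_take, List.length_drop]
    split_ifs <;> first | rfl | (exfalso; omega) | (congr 1; omega)
  -- rotation-side facts
  have E1 : ∀ m, m < P.length → τ[m]? = σ[m]? := by
    intro m hm
    rw [hσ, hτ]
    simp only [List.getElem?_append, List.getElem?_cons, List.length_append, List.length_cons]
    split_ifs <;> first | rfl | (exfalso; omega) | (congr 1; omega)
  have E2 : ∀ m, P.length ≤ m → m < P.length + B.length → τ[m]? = σ[m+1]? := by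
    intro m h1 h2
    rw [hσ, hτ]
    simp only [List.getElem?_append, List.getElem?_cons, List.length_append, List.length_cons]
    split_ifs <;> first | rfl | (exfalso; omega) | (congr 1; omega)
  have E4 : ∀ m, P.length + B.length < m → τ[m]? = σ[m]? := by
    intro m hm
    rw [hσ, hτ]
    simp only [List.getElem?_append, List.getElem?_cons, List.length_append, List.length_cons]
    split_ifs <;> first | rfl | (exfalso; omega) | (congr 1; omega)
  -- step 1 : i0 = P.length
  have hstep1 : i0 = P.length := by
    rcases Nat.lt_trichotomy i0 P.length with h | h | h
    · have hx : σ[i0]? = σ[j0]? := (E1 i0 h).symm.trans T2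
      have := aux_nodup_inj hnd (by omega) (by omega) hx
      omega
    · exact h
    · have hx : σ[P.length]? = σ[P.length + 1]? :=
        (T1 _ h).symm.trans (E2 P.length le_rfl (by omega))
      have := aux_nodup_inj hnd (by omega) (by omega) hx
      omega
  -- step 2 : k0 = P.length + B.length + 1
  have hstep2 : k0 = P.length + B.length + 1 := by
    rcases Nat.lt_trichotomy (k0 - 1) (P.length + B.length) with h | h | h
    · have h1 : P.length ≤ k0 - 1 := by omega
      have hx : σ[j0-1]? = σ[k0 - 1 + 1]? := T3.symm.trans (E2 (k0-1) h1 h)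
      rw [show k0 - 1 + 1 = k0 by omega] at hx
      have := aux_nodup_inj hnd (by omega) (by omega) hx
      omega
    · omega
    · have hx : σ[j0-1]? = σ[k0-1]? := T3.symm.trans (E4 (k0-1) h)
      have := aux_nodup_inj hnd (by omega) (by omega) hx
      omega
  -- step 3
  have hx : σ[j0]? = σ[P.length + 1]? := by
    rw [hstep1] at T2
    exact T2.symm.trans (E2 P.length le_rfl (by omega))
  have := aux_nodup_inj hnd (by omega) (by omega) hx
  omega

lemma aux_key_case2 (σ τ P B Q : List ℕ) (a : ℕ) (hB : B ≠ []) (hnd : σ.Nodup)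
    (i0 j0 k0 : ℕ) (hij : i0 < j0) (hjk : j0 < k0) (hk : k0 ≤ σ.length)
    (hσ : σ = P ++ (B ++ a :: Q)) (hτ : τ = P ++ a :: (B ++ Q))
    (ht : σ.take i0 ++ (σ.drop j0).take (k0 - j0) ++ (σ.drop i0).take (j0 - i0) ++ σ.drop k0 = τ) :
    k0 = j0 + 1 := by
  have hb : 0 < B.length := List.length_pos_iff.2 hB
  have hn : σ.length = P.length + 1 + B.length + Q.length := by
    rw [hσ]; simp only [List.length_append, List.length_cons]; omega
  have T1 : ∀ m, m < i0 → τ[m]? = σ[m]? := by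
    intro m hm
    rw [← ht]
    simp only [List.getElem?_append, List.getElem?_take, List.getElem?_drop,
      List.length_append, List.length_take, List.length_drop]
    split_ifs <;> first | rfl | (exfalso; omega) | (congr 1; omega)
  have T2 : τ[i0]? = σ[j0]? := by
    rw [← ht]
    simp only [List.getElem?_append, List.getElem?_take, List.getElem?_drop,
      List.length_append, List.length_take, List.length_drop]
    split_ifs <;> first | rfl | (exfalso; omega) | (congr 1; omega)
  have T3 : τ[k0-1]? = σ[j0-1]? := by
    rw [← ht]
    simp only [List.getElem?_append, List.getElem?_take, List.getElem?_drop,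
      List.length_append, List.length_take, List.length_drop]
    split_ifs <;> first | rfl | (exfalso; omega) | (congr 1; omega)
  have T4 : ∀ m, k0 ≤ m → τ[m]? = σ[m]? := by
    intro m hm
    rw [← ht]
    simp only [List.getElem?_append, List.getElem?_take, List.getElem?_drop,
      List.length_append, List.length_take, List.length_drop]
    split_ifs <;> first | rfl | (exfalso; omega) | (congr 1; omega)
  have E1 : ∀ m, m < P.length → τ[m]? = σ[m]? := by
    intro m hm
    rw [hσ, hτ]
    simp only [List.getElem?_append, List.getElem?_cons, List.length_append, List.length_cons]
    split_ifs <;> first | rfl | (exfalso; omega) | (congr 1; omega)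
  have E2 : τ[P.length]? = σ[P.length + B.length]? := by
    rw [hσ, hτ]
    simp only [List.getElem?_append, List.getElem?_cons, List.length_append, List.length_cons]
    split_ifs <;> first | rfl | (exfalso; omega) | (congr 1; omega)
  have E3 : ∀ m, P.length < m → m ≤ P.length + B.length → τ[m]? = σ[m-1]? := by
    intro m h1 h2
    rw [hσ, hτ]
    simp only [List.getElem?_append, List.getElem?_cons, List.length_append, List.length_cons]
    split_ifs <;> first | rfl | (exfalso; omega) | (congr 1; omega)
  have E4 : ∀ m, P.length + B.length < m → τ[m]? = σ[m]? := by
    intro m hm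
    rw [hσ, hτ]
    simp only [List.getElem?_append, List.getElem?_cons, List.length_append, List.length_cons]
    split_ifs <;> first | rfl | (exfalso; omega) | (congr 1; omega)
  have hstep1 : i0 = P.length := by
    rcases Nat.lt_trichotomy i0 P.length with h | h | h
    · have hx : σ[i0]? = σ[j0]? := (E1 i0 h).symm.trans T2
      have := aux_nodup_inj hnd (by omega) (by omega) hx
      omega
    · exact h
    · have hx : σ[P.length]? = σ[P.length + B.length]? := (T1 _ h).symm.trans E2
      have := aux_nodup_inj hnd (by omega) (by omega) hx
      omega
  have hstep2 : k0 = P.length + B.length + 1 := by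
    rcases Nat.lt_trichotomy (k0 - 1) (P.length + B.length) with h | h | h
    · have h1 : P.length < k0 := by omega
      have hx : σ[k0]? = σ[k0-1]? := (T4 k0 le_rfl).symm.trans (E3 k0 h1 (by omega))
      have := aux_nodup_inj hnd (by omega) (by omega) hx
      omega
    · omega
    · have hx : σ[j0-1]? = σ[k0-1]? := T3.symm.trans (E4 (k0-1) h)
      have := aux_nodup_inj hnd (by omega) (by omega) hx
      omega
  have hx : σ[j0]? = σ[P.length + B.length]? := by
    rw [hstep1] at T2
    exact T2.symm.trans E2
  have := aux_nodup_inj hnd (by omega) (by omega) hx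
  omega

end KeyTreeTransposition

/-- every tree transposition is a 1-transposition: if `δ_{i,j,k}` maps the
tree permutation of `T1` to that of `T2` for some full binary trees at rotation
distance 1, then `j = i+1` or `k = j+1`. -/
theorem tree_transposition_is_one_transposition (n i j k : ℕ)
    (hi : 1 ≤ i) (hij : i < j) (hjk : j < k) (hk : k ≤ n + 1)
    (T1 T2 : FBT) (h1 : T1.internal = n) (h2 : T2.internal = n)
    (hd : rotDist T1 T2 = 1)
    (ht : transposeList i j k (T1.preorderAux 0) = T2.preorderAux 0) :
    j = i + 1 ∨ k = j + 1 := by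
  have hrot : Rot T1 T2 := aux_rot_of_rotDist_one hd
  obtain ⟨P, B, Q, a, hB, hcase⟩ := aux_rot_decomp hrot 0
  obtain ⟨i0, rfl⟩ : ∃ i0, i = i0 + 1 := ⟨i - 1, by omega⟩
  obtain ⟨j0, rfl⟩ : ∃ j0, j = j0 + 1 := ⟨j - 1, by omega⟩
  obtain ⟨k0, rfl⟩ : ∃ k0, k = k0 + 1 := ⟨k - 1, by omega⟩
  have hnd : (T1.preorderAux 0).Nodup := aux_nodup_preorderAux T1 0
  have hlen : (T1.preorderAux 0).length = n := by rw [aux_length_preorderAux, h1]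
  have e1 : i0 + 1 - 1 = i0 := by omega
  have e2 : j0 + 1 - 1 = j0 := by omega
  have e3 : k0 + 1 - 1 = k0 := by omega
  have e4 : k0 + 1 - (j0 + 1) = k0 - j0 := by omega
  have e5 : j0 + 1 - (i0 + 1) = j0 - i0 := by omega
  rw [transposeList, e1, e2, e3, e4, e5] at ht
  rcases hcase with ⟨hσ, hτ⟩ | ⟨hσ, hτ⟩
  · have := aux_key_case1 (T1.preorderAux 0) (T2.preorderAux 0) P B Q a hB hnd
      i0 j0 k0 (by omega) (by omega) (by omega) hσ hτ ht
    omega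
  · have := aux_key_case2 (T1.preorderAux 0) (T2.preorderAux 0) P B Q a hB hnd
      i0 j0 k0 (by omega) (by omega) (by omega) hσ hτ ht
    omega
end

section
/- For any two full skew trees T1 and T2 with n internal nodes each, the skew rotation distance between T1 and T2 is at most n² (in particular, a rank-bounded path of length at most n² exists, so d_R(T1, T2) ≤ n²). -/
section Aux

open FBT

/-- Skew trees are caterpillars: encode by a word, `true` = internal child on right. -/
def ofWord : List Bool → FBT
  | [] => node leaf leaf
  | b :: w => if b then node leaf (ofWord w) else node (ofWord w) leaf

lemma ofWord_skew : ∀ w, (ofWord w).skew := by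
  intro w
  induction w with
  | nil => exact ⟨Or.inl rfl, trivial, trivial⟩
  | cons b v ih =>
    cases b <;> simp [ofWord, skew, ih]

lemma internal_eq_zero : ∀ {T : FBT}, T.internal = 0 → T = leaf := by
  intro T h
  cases T with
  | leaf => rfl
  | node l r => simp [internal] at h

lemma skew_to_word : ∀ (T : FBT), T.skew → T ≠ leaf →
    ∃ w : List Bool, T = ofWord w ∧ w.length + 1 = T.internal := by
  intro T
  induction T with
  | leaf => intro _ h; exact absurd rfl h
  | node l r ihl ihr =>
    intro hs _
    obtain ⟨hlr, hsl, hsr⟩ := hs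
    by_cases hl : l = leaf
    · by_cases hr : r = leaf
      · exact ⟨[], by simp [hl, hr, ofWord, internal]⟩
      · obtain ⟨w, hw, hlen⟩ := ihr hsr hr
        exact ⟨true :: w, by simp [hl, hw, ofWord], by
          simp [hl, internal, List.length_cons]; omega⟩
    · have hr : r = leaf := hlr.resolve_left hl
      obtain ⟨w, hw, hlen⟩ := ihl hsl hl
      exact ⟨false :: w, by simp [hr, hw, ofWord], by
        simp [hr, internal, List.length_cons]; omega⟩

lemma Rot.symm : ∀ {a b : FBT}, Rot a b → Rot b a := by
  intro a b h
  induction h with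
  | rotR C D E => exact Rot.rotL C D E
  | rotL C D E => exact Rot.rotR C D E
  | congrL r _ ih => exact Rot.congrL r ih
  | congrR l _ ih => exact Rot.congrR l ih

lemma chain_trans {P : FBT → Prop} :
    ∀ {j k : ℕ} {A B C : FBT}, RotChainP P j A B → RotChainP P k B C →
      RotChainP P (j + k) A C := by
  intro j
  induction j with
  | zero => intro k A B C h1 h2; cases h1; simpa using h2
  | succ j ih =>
    intro k A B C h1 h2
    obtain ⟨T, hr, hp, hc⟩ := h1
    have e : j + 1 + k = (j + k) + 1 := by omega
    rw [e]
    exact ⟨T, hr, hp, ih hc h2⟩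

lemma chain_snoc {P : FBT → Prop} :
    ∀ {k : ℕ} {A B C : FBT}, RotChainP P k A B → Rot B C → P C →
      RotChainP P (k + 1) A C := by
  intro k
  induction k with
  | zero => intro A B C h1 h2 h3; cases h1; exact ⟨C, h2, h3, rfl⟩
  | succ k ih =>
    intro A B C h1 h2 h3
    obtain ⟨T, hr, hp, hc⟩ := h1
    exact ⟨T, hr, hp, ih hc h2 h3⟩

lemma chain_symm {P : FBT → Prop} :
    ∀ {k : ℕ} {A B : FBT}, RotChainP P k A B → P A → RotChainP P k B A := by
  intro k
  induction k with
  | zero => intro A B h _; exact h.symm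
  | succ k ih =>
    intro A B h hA
    obtain ⟨T, hr, hp, hc⟩ := h
    exact chain_snoc (ih hc hp) hr.symm hA

lemma chain_congrL :
    ∀ {k : ℕ} {A B : FBT}, RotChainP FBT.skew k A B →
      RotChainP FBT.skew k (node A leaf) (node B leaf) := by
  intro k
  induction k with
  | zero => intro A B h; rw [h]; rfl
  | succ k ih =>
    intro A B h
    obtain ⟨T, hr, hp, hc⟩ := h
    exact ⟨node T leaf, Rot.congrL leaf hr, ⟨Or.inr rfl, hp, trivial⟩, ih hc⟩

lemma chain_congrR :
    ∀ {k : ℕ} {A B : FBT}, RotChainP FBT.skew k A B →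
      RotChainP FBT.skew k (node leaf A) (node leaf B) := by
  intro k
  induction k with
  | zero => intro A B h; rw [h]; rfl
  | succ k ih =>
    intro A B h
    obtain ⟨T, hr, hp, hc⟩ := h
    exact ⟨node leaf T, Rot.congrR leaf hr, ⟨Or.inl rfl, trivial, hp⟩, ih hc⟩

/-- pushing a leading `true` through `m` `false`s, then flipping it: `m+1` steps. -/
lemma push : ∀ m : ℕ, RotChainP FBT.skew (m + 1)
    (ofWord (true :: List.replicate m false)) (ofWord (List.replicate (m + 1) false)) := by
  intro m
  induction m with
  | zero =>
    refine ⟨ofWord [false], ?_, ofWord_skew _, rfl⟩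
    show Rot (node leaf (node leaf leaf)) (node (node leaf leaf) leaf)
    exact Rot.rotL leaf leaf leaf
  | succ m ih =>
    refine ⟨ofWord (false :: true :: List.replicate m false), ?_, ofWord_skew _, ?_⟩
    · show Rot (node leaf (node (ofWord (List.replicate m false)) leaf))
        (node (node leaf (ofWord (List.replicate m false))) leaf)
      exact Rot.rotL leaf _ leaf
    · show RotChainP FBT.skew (m + 1) (node (ofWord (true :: List.replicate m false)) leaf)
        (ofWord (List.replicate (m + 2) false))
      have : ofWord (List.replicate (m + 2) false)
          = node (ofWord (List.replicate (m + 1) false)) leaf := by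
        rw [List.replicate_succ]; rfl
      rw [this]
      exact chain_congrL ih

/-- every word can be turned into the all-`false` word in at most `m(m+1)/2` steps. -/
lemma toLeft : ∀ w : List Bool, ∃ k : ℕ, 2 * k ≤ w.length * (w.length + 1) ∧
    RotChainP FBT.skew k (ofWord w) (ofWord (List.replicate w.length false)) := by
  intro w
  induction w with
  | nil => exact ⟨0, by norm_num, rfl⟩
  | cons b v ih =>
    obtain ⟨k, hk, hc⟩ := ih
    cases b with
    | false =>
      refine ⟨k, ?_, ?_⟩
      · simp only [List.length_cons]; nlinarith
      · rw [List.length_cons, List.replicate_succ]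
        show RotChainP FBT.skew k (node (ofWord v) leaf)
          (node (ofWord (List.replicate v.length false)) leaf)
        exact chain_congrL hc
    | true =>
      refine ⟨k + (v.length + 1), ?_, ?_⟩
      · simp only [List.length_cons]; nlinarith
      · have c1 : RotChainP FBT.skew k (ofWord (true :: v))
            (ofWord (true :: List.replicate v.length false)) := chain_congrR hc
        have c2 := push v.length
        rw [List.length_cons]
        exact chain_trans c1 c2

end Aux

/-- for any two full skew trees with `n` internal nodes each, there is a
sequence of at most `n²` rotations from one to the other in which every
intermediate tree is also a full skew tree. -/
theorem skew_rotation_distance_le_n_sq (n : ℕ) (T1 T2 : FBT)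
    (h1 : T1.internal = n) (h2 : T2.internal = n)
    (hs1 : T1.skew) (hs2 : T2.skew) :
    ∃ k ≤ n ^ 2, RotChainP FBT.skew k T1 T2 := by
  rcases Nat.eq_zero_or_pos n with hn | hn
  · subst hn
    have e1 : T1 = FBT.leaf := internal_eq_zero h1
    have e2 : T2 = FBT.leaf := internal_eq_zero h2
    exact ⟨0, Nat.zero_le _, by rw [e1, e2]; rfl⟩
  · have ne1 : T1 ≠ FBT.leaf := by
      intro h; rw [h] at h1; simp [FBT.internal] at h1; omega
    have ne2 : T2 ≠ FBT.leaf := by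
      intro h; rw [h] at h2; simp [FBT.internal] at h2; omega
    obtain ⟨w1, hw1, hl1⟩ := skew_to_word T1 hs1 ne1
    obtain ⟨w2, hw2, hl2⟩ := skew_to_word T2 hs2 ne2
    obtain ⟨k1, hk1, hc1⟩ := toLeft w1
    obtain ⟨k2, hk2, hc2⟩ := toLeft w2
    have hlen : w1.length = w2.length := by omega
    have hc2' : RotChainP FBT.skew k2 (ofWord (List.replicate w2.length false)) (ofWord w2) :=
      chain_symm hc2 (ofWord_skew _)
    rw [hlen] at hc1
    have hc : RotChainP FBT.skew (k1 + k2) T1 T2 := by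
      rw [hw1, hw2]; exact chain_trans hc1 hc2'
    refine ⟨k1 + k2, ?_, hc⟩
    have : w1.length + 1 = n := by omega
    rw [pow_two]
    nlinarith
end

section
/- For any full binary tree T with n internal nodes and height h, the minimum rotation distance from T to a full skew tree with n internal nodes is exactly n − h; that is, some skew tree is at rotation distance n − h from T, and every skew tree is at rotation distance at least n − h from T. -/
section Aux

open FBT

lemma rot_internal {T T' : FBT} (h : Rot T T') : T'.internal = T.internal := by
  induction h <;> simp [FBT.internal, *] <;> omega

lemma rot_height {T T' : FBT} (h : Rot T T') : T'.height ≤ T.height + 1 := by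
  induction h <;> simp [FBT.height, *] <;> omega

lemma skew_height {S : FBT} (h : S.skew) : S.height = S.internal := by
  induction S with
  | leaf => rfl
  | node l r ihl ihr =>
    obtain ⟨hleaf, hl, hr⟩ := h
    cases hleaf with
    | inl e => subst e; simp [FBT.height, FBT.internal, ihr hr]
    | inr e => subst e; simp [FBT.height, FBT.internal, ihl hl]

lemma height_le_internal (T : FBT) : T.height ≤ T.internal := by
  induction T with
  | leaf => exact le_refl 0
  | node l r ihl ihr => simp [FBT.height, FBT.internal]; omega

lemma rotChain_single {T T' : FBT} (h : Rot T T') : RotChain 1 T T' :=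
  ⟨T', h, trivial, rfl⟩

lemma rotChain_trans {a b : ℕ} {T U V : FBT} (h1 : RotChain a T U)
    (h2 : RotChain b U V) : RotChain (a + b) T V := by
  induction a generalizing T with
  | zero => cases h1; rw [Nat.zero_add]; exact h2
  | succ a ih =>
    obtain ⟨W, hW, -, hc⟩ := h1
    rw [Nat.add_right_comm]
    exact ⟨W, hW, trivial, ih hc⟩

lemma rotChain_congrL {k : ℕ} {l l' : FBT} (r : FBT) (h : RotChain k l l') :
    RotChain k (FBT.node l r) (FBT.node l' r) := by
  induction k generalizing l with
  | zero => cases h; rfl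
  | succ k ih =>
    obtain ⟨W, hW, -, hc⟩ := h
    exact ⟨FBT.node W r, Rot.congrL r hW, trivial, ih hc⟩

lemma rotChain_congrR {k : ℕ} {r r' : FBT} (l : FBT) (h : RotChain k r r') :
    RotChain k (FBT.node l r) (FBT.node l r') := by
  induction k generalizing r with
  | zero => cases h; rfl
  | succ k ih =>
    obtain ⟨W, hW, -, hc⟩ := h
    exact ⟨FBT.node l W, Rot.congrR l hW, trivial, ih hc⟩

lemma rotChain_internal {k : ℕ} {T T' : FBT} (h : RotChain k T T') :
    T'.internal = T.internal := by
  induction k generalizing T with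
  | zero => cases h; rfl
  | succ k ih =>
    obtain ⟨W, hW, -, hc⟩ := h
    rw [ih hc, rot_internal hW]

lemma rotChain_height {k : ℕ} {T T' : FBT} (h : RotChain k T T') :
    T'.height ≤ T.height + k := by
  induction k generalizing T with
  | zero => cases h; omega
  | succ k ih =>
    obtain ⟨W, hW, -, hc⟩ := h
    have := rot_height hW
    have := ih hc
    omega

/-- Flatten the left subtree into a skew spine. -/
lemma flattenL : ∀ (l S : FBT), S.skew →
    ∃ S', S'.skew ∧ RotChain l.internal (FBT.node l S) S' := by
  intro l
  induction l with
  | leaf =>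
    intro S hS
    exact ⟨FBT.node FBT.leaf S, ⟨Or.inl rfl, trivial, hS⟩, rfl⟩
  | node A B ihA ihB =>
    intro S hS
    obtain ⟨S1, hS1, hc1⟩ := ihB S hS
    obtain ⟨S2, hS2, hc2⟩ := ihA S1 hS1
    refine ⟨S2, hS2, ?_⟩
    have step : RotChain 1 (FBT.node (FBT.node A B) S) (FBT.node A (FBT.node B S)) :=
      rotChain_single (Rot.rotR A B S)
    have h3 := rotChain_trans step
      (rotChain_trans (rotChain_congrR A hc1) hc2)
    have : (FBT.node A B).internal = 1 + (B.internal + A.internal) := by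
      simp [FBT.internal]; omega
    rw [this]
    exact h3

/-- Flatten the right subtree into a skew spine. -/
lemma flattenR : ∀ (r S : FBT), S.skew →
    ∃ S', S'.skew ∧ RotChain r.internal (FBT.node S r) S' := by
  intro r
  induction r with
  | leaf =>
    intro S hS
    exact ⟨FBT.node S FBT.leaf, ⟨Or.inr rfl, hS, trivial⟩, rfl⟩
  | node D E ihD ihE =>
    intro S hS
    obtain ⟨S1, hS1, hc1⟩ := ihD S hS
    obtain ⟨S2, hS2, hc2⟩ := ihE S1 hS1
    refine ⟨S2, hS2, ?_⟩
    have step : RotChain 1 (FBT.node S (FBT.node D E)) (FBT.node (FBT.node S D) E) :=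
      rotChain_single (Rot.rotL S D E)
    have h3 := rotChain_trans step
      (rotChain_trans (rotChain_congrL E hc1) hc2)
    have : (FBT.node D E).internal = 1 + (D.internal + E.internal) := by
      simp [FBT.internal]; omega
    rw [this]
    exact h3

lemma exists_skew_chain : ∀ T : FBT,
    ∃ S : FBT, S.skew ∧ RotChain (T.internal - T.height) T S := by
  intro T
  induction T with
  | leaf => exact ⟨FBT.leaf, trivial, rfl⟩
  | node l r ihl ihr =>
    by_cases hcase : r.height ≥ l.height
    · obtain ⟨Sr, hSr, hcr⟩ := ihr
      obtain ⟨S', hS', hc'⟩ := flattenL l Sr hSr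
      refine ⟨S', hS', ?_⟩
      have h1 := rotChain_trans (rotChain_congrR l hcr) hc'
      have hhr := height_le_internal r
      have : (FBT.node l r).internal - (FBT.node l r).height
          = (r.internal - r.height) + l.internal := by
        simp [FBT.internal, FBT.height]
        omega
      rw [this]
      exact h1
    · obtain ⟨Sl, hSl, hcl⟩ := ihl
      obtain ⟨S', hS', hc'⟩ := flattenR r Sl hSl
      refine ⟨S', hS', ?_⟩
      have h1 := rotChain_trans (rotChain_congrL r hcl) hc'
      have hhl := height_le_internal l
      have : (FBT.node l r).internal - (FBT.node l r).height
          = (l.internal - l.height) + r.internal := by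
        simp [FBT.internal, FBT.height]
        omega
      rw [this]
      exact h1

end Aux

/-- for a full binary tree `T` with `n` internal nodes and height `h`,
the distance to the nearest full skew tree is exactly `n - h`: some skew tree is
reachable in `n - h` rotations, and no skew tree is reachable in fewer. -/
theorem distance_to_nearest_skew_tree (n h : ℕ) (T : FBT)
    (hn : T.internal = n) (hh : T.height = h) :
    (∃ S : FBT, S.internal = n ∧ S.skew ∧ RotChain (n - h) T S) ∧
    (∀ (S : FBT) (k : ℕ), S.internal = n → S.skew → RotChain k T S → n - h ≤ k) := by
  subst hn hh
  constructor
  · obtain ⟨S, hS, hc⟩ := exists_skew_chain T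
    exact ⟨S, rotChain_internal hc, hS, hc⟩
  · intro S k hSn hSskew hc
    have h1 := skew_height hSskew
    have h2 := rotChain_height hc
    omega
end
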